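/- Let V be a finite-dimensional irreducible module over sl(2,ℂ) whose dimension is either equal to 2 or odd. Then the sl(2,ℂ)-module V ⊗ sl(2,ℂ) is generated by its sl(2,ℂ)-overshears, i.e., the smallest Lie submodule of V ⊗ sl(2,ℂ) containing all sl(2,ℂ)-overshears equals V ⊗ sl(2,ℂ). -/

import Mathlib

open TensorProduct

section Aux

variable {L : Type} [LieRing L] [LieAlgebra ℂ L] {E F H : L}

/-- If `E, F, H` span `L`, a bracket property that holds for `E, F, H` holds for all `x`. -/
lemma aux_lie_mem_of_EFH
    (hspan : Submodule.span ℂ ({E, F, H} : Set L) = ⊤)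
    {M' : Type} [AddCommGroup M'] [Module ℂ M'] [LieRingModule L M']
    [LieModule ℂ L M'] (U : Submodule ℂ M') (z : M')
    (hE : ⁅E, z⁆ ∈ U) (hF : ⁅F, z⁆ ∈ U) (hH : ⁅H, z⁆ ∈ U) (x : L) :
    ⁅x, z⁆ ∈ U := by
  have hx : x ∈ Submodule.span ℂ ({E, F, H} : Set L) := hspan ▸ Submodule.mem_top
  induction hx using Submodule.span_induction with
  | mem y hy =>
    simp only [Set.mem_insert_iff, Set.mem_singleton_iff] at hy
    rcases hy with rfl | rfl | rfl <;> assumption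
  | zero => simpa using U.zero_mem
  | add y₁ y₂ _ _ h1 h2 => rw [add_lie]; exact U.add_mem h1 h2
  | smul a y _ h => rw [smul_lie]; exact U.smul_mem a h

lemma aux_tmul_mem_of_EFH
    (hspan : Submodule.span ℂ ({E, F, H} : Set L) = ⊤)
    {V : Type} [AddCommGroup V] [Module ℂ V]
    (U : Submodule ℂ (V ⊗[ℂ] L)) (v : V)
    (hE : v ⊗ₜ[ℂ] E ∈ U) (hF : v ⊗ₜ[ℂ] F ∈ U) (hH : v ⊗ₜ[ℂ] H ∈ U) (z : L) :
    v ⊗ₜ[ℂ] z ∈ U := by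
  have hz : z ∈ Submodule.span ℂ ({E, F, H} : Set L) := hspan ▸ Submodule.mem_top
  induction hz using Submodule.span_induction with
  | mem y hy =>
    simp only [Set.mem_insert_iff, Set.mem_singleton_iff] at hy
    rcases hy with rfl | rfl | rfl <;> assumption
  | zero => rw [tmul_zero]; exact U.zero_mem
  | add y₁ y₂ _ _ h1 h2 => rw [tmul_add]; exact U.add_mem h1 h2
  | smul a y _ h => rw [tmul_smul]; exact U.smul_mem a h

end Aux

/-- **Theorem (Tóth–Varolin).**  If `V` is a finite-dimensional irreducible module over
`sl(2,ℂ)` (here presented as a complex Lie algebra `L` with basis `E, F, H` satisfying the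
standard commutation relations `[H,E] = 2E`, `[H,F] = -2F`, `[E,F] = H`) whose dimension is
either `2` or odd, then the module `V ⊗ L` (with action `x·(v ⊗ y) = (x·v) ⊗ y + v ⊗ [x,y]`)
is generated by its overshears, i.e. the smallest Lie submodule containing all elements
`v ⊗ₜ x` with `x·(x·v) = 0` is everything. -/
theorem sl2_overshears_generate_of_dim_two_or_odd
    {L : Type} [LieRing L] [LieAlgebra ℂ L]
    (E F H : L) (b : Module.Basis (Fin 3) ℂ L) (hb : ⇑b = ![E, F, H])
    (hHE : ⁅H, E⁆ = (2 : ℂ) • E) (hHF : ⁅H, F⁆ = (-2 : ℂ) • F) (hEF : ⁅E, F⁆ = H)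
    {V : Type} [AddCommGroup V] [Module ℂ V] [LieRingModule L V] [LieModule ℂ L V]
    [FiniteDimensional ℂ V] [LieModule.IsIrreducible ℂ L V]
    (hdim : Module.finrank ℂ V = 2 ∨ Odd (Module.finrank ℂ V)) :
    LieSubmodule.lieSpan ℂ L
      {z : V ⊗[ℂ] L | ∃ (v : V) (x : L), z = v ⊗ₜ[ℂ] x ∧ ⁅x, ⁅x, v⁆⁆ = (0 : V)} = ⊤ := by
  classical
  -- E, F, H span L
  have hspan : Submodule.span ℂ ({E, F, H} : Set L) = ⊤ := by
    have h1 := b.span_eq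
    rw [hb] at h1
    rw [← h1]
    congr 1
    ext x
    simp [Fin.exists_fin_succ]
    tauto
  -- the sl2 triple
  have hH0 : H ≠ 0 := by
    have h2 : b 2 = H := by rw [hb]; rfl
    exact h2 ▸ b.ne_zero 2
  have t : IsSl2Triple H E F :=
    { h_ne_zero := hH0
      lie_e_f := hEF
      lie_h_e_nsmul := by
        rw [hHE, ← Nat.cast_smul_eq_nsmul ℂ 2 E]; norm_num
      lie_h_f_nsmul := by
        rw [hHF, ← Nat.cast_smul_eq_nsmul ℂ 2 F]; norm_num }
  have : Nontrivial V := LieModule.nontrivial_of_isIrreducible ℂ L V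
  -- eigenvector for H
  obtain ⟨μ₀, hμ₀⟩ := Module.End.exists_eigenvalue (LieModule.toEnd ℂ L V H)
  obtain ⟨v, hv⟩ := hμ₀.exists_hasEigenvector
  -- climbing with E
  have key : ∀ j : ℕ, ⁅H, ((LieModule.toEnd ℂ L V E) ^ j) v⁆
      = (μ₀ + 2 * j) • ((LieModule.toEnd ℂ L V E) ^ j) v := by
    intro j
    induction j with
    | zero =>
      simpa using hv.apply_eq_smul
    | succ j ih =>
      have h3 : ((LieModule.toEnd ℂ L V E) ^ (j + 1)) v
          = ⁅E, ((LieModule.toEnd ℂ L V E) ^ j) v⁆ := by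
        rw [pow_succ']; rfl
      rw [h3, leibniz_lie, hHE, smul_lie, ih, lie_smul]
      push_cast
      module
  have hex : ∃ j : ℕ, ((LieModule.toEnd ℂ L V E) ^ j) v = 0 := by
    by_contra! contra
    have hs : (Set.range fun n : ℕ => μ₀ + 2 * n).Infinite := by
      rw [Set.infinite_range_iff (fun n m h => by
        simpa using h)]
      infer_instance
    exact hs ((LieModule.toEnd ℂ L V H).eigenvectors_linearIndependent
      {c | ∃ n : ℕ, μ₀ + 2 * n = c}
      (fun c => ((LieModule.toEnd ℂ L V E) ^ (Classical.choose c.2)) v)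
      (fun c => by
        rw [Module.End.hasEigenvector_iff, Module.End.mem_eigenspace_iff]
        refine ⟨?_, contra _⟩
        rw [LieModule.toEnd_apply_apply, key, Classical.choose_spec c.2])).finite
  obtain ⟨j, hj1, hj2⟩ := Nat.exists_not_and_succ_of_not_zero_of_exists
    (p := fun j => ((LieModule.toEnd ℂ L V E) ^ j) v = 0)
    (by simpa using hv.right) hex
  have P : t.HasPrimitiveVectorWith (((LieModule.toEnd ℂ L V E) ^ j) v) (μ₀ + 2 * j) :=
    { ne_zero := hj1
      lie_h := key j
      lie_e := by
        have h3 : ⁅E, ((LieModule.toEnd ℂ L V E) ^ j) v⁆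
            = ((LieModule.toEnd ℂ L V E) ^ (j + 1)) v := by
          rw [pow_succ']; rfl
        rw [h3, hj2] }
  clear hj1 hj2 key hex hμ₀ hv
  obtain ⟨μ, m, P⟩ : ∃ (μ : ℂ) (m : V), t.HasPrimitiveVectorWith m μ := ⟨_, _, P⟩
  obtain ⟨d, hd⟩ := P.exists_nat
  subst hd
  -- the weight vectors
  set w : ℕ → V := fun i => ((LieModule.toEnd ℂ L V F) ^ i) m with hwdef
  have hw0 : w 0 = m := by simp [hwdef]
  have hwsucc : ∀ i, w (i + 1) = ⁅F, w i⁆ := fun i => (P.lie_f_pow_toEnd_f i).symm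
  have hwH : ∀ i : ℕ, ⁅H, w i⁆ = ((d : ℂ) - 2 * i) • w i := fun i => P.lie_h_pow_toEnd_f i
  have hwE : ∀ i : ℕ, ⁅E, w (i + 1)⁆ = (((i : ℂ) + 1) * ((d : ℂ) - i)) • w i :=
    fun i => P.lie_e_pow_succ_toEnd_f i
  have hwE0 : ⁅E, w 0⁆ = 0 := by rw [hw0]; exact P.lie_e
  have hwne : ∀ i : ℕ, i ≤ d → w i ≠ 0 := fun i hi => P.pow_toEnd_f_ne_zero_of_eq_nat rfl hi
  have hwtop : w (d + 1) = 0 := P.pow_toEnd_f_eq_zero_of_eq_nat rfl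
  -- linear independence
  have hli : LinearIndependent ℂ (fun i : Fin (d + 1) => w i) := by
    apply (LieModule.toEnd ℂ L V H).eigenvectors_linearIndependent'
      (fun i : Fin (d + 1) => (d : ℂ) - 2 * i)
    · intro i i' hii
      have h2 : (2 : ℂ) * i = 2 * i' := by linear_combination -hii
      have h3 : (i : ℕ) = (i' : ℕ) := by exact_mod_cast mul_left_cancel₀ two_ne_zero h2
      exact Fin.ext h3
    · intro i
      rw [Module.End.hasEigenvector_iff, Module.End.mem_eigenspace_iff]
      exact ⟨by rw [LieModule.toEnd_apply_apply]; exact hwH i, hwne i (by omega)⟩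
  -- spanning
  have hsp : ⊤ ≤ Submodule.span ℂ (Set.range fun i : Fin (d + 1) => w i) := by
    set sp := Submodule.span ℂ (Set.range fun i : Fin (d + 1) => w i) with hspdef
    have hgen : ∀ i : ℕ, i < d + 1 → w i ∈ sp :=
      fun i hi => Submodule.subset_span ⟨⟨i, hi⟩, rfl⟩
    have stable : ∀ (x : L) (z : V), z ∈ sp → ⁅x, z⁆ ∈ sp := by
      intro x z hz
      induction hz using Submodule.span_induction with
      | mem y hy =>
        obtain ⟨⟨i, hi⟩, rfl⟩ := hy
        refine aux_lie_mem_of_EFH hspan sp _ ?_ ?_ ?_ x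
        · show ⁅E, w i⁆ ∈ sp
          match i, hi with
          | 0, _ => rw [hwE0]; exact sp.zero_mem
          | (i' + 1), hi => rw [hwE i']; exact sp.smul_mem _ (hgen i' (by omega))
        · show ⁅F, w i⁆ ∈ sp
          rw [← hwsucc i]
          rcases Nat.lt_or_ge i d with h | h
          · exact hgen _ (by omega)
          · have hid : i = d := by omega
            subst hid; rw [hwtop]; exact sp.zero_mem
        · show ⁅H, w i⁆ ∈ sp
          rw [hwH]; exact sp.smul_mem _ (hgen i hi)
      | zero => rw [lie_zero]; exact sp.zero_mem
      | add a c _ _ h1 h2 => rw [lie_add]; exact sp.add_mem h1 h2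
      | smul a y _ h1 => rw [lie_smul]; exact sp.smul_mem a h1
    let W : LieSubmodule ℂ L V := { sp with lie_mem := fun {x z} hz => stable x z hz }
    have hWne : W ≠ ⊥ := by
      intro hbot
      have hm : m ∈ W := by show m ∈ sp; rw [← hw0]; exact hgen 0 (by omega)
      rw [hbot] at hm
      exact P.ne_zero (by simpa using hm)
    have hWtop : W = ⊤ := (eq_bot_or_eq_top W).resolve_left hWne
    intro u _
    have hu : u ∈ W := by rw [hWtop]; exact LieSubmodule.mem_top ..
    exact hu
  let bV : Module.Basis (Fin (d + 1)) ℂ V := Module.Basis.mk hli hsp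
  have hrank : Module.finrank ℂ V = d + 1 := by
    rw [Module.finrank_eq_card_basis bV, Fintype.card_fin]
  -- the submodule generated by overshears
  set N := LieSubmodule.lieSpan ℂ L
    {z : V ⊗[ℂ] L | ∃ (u : V) (x : L), z = u ⊗ₜ[ℂ] x ∧ ⁅x, ⁅x, u⁆⁆ = (0 : V)} with hNdef
  have hS : ∀ (u : V) (x : L), ⁅x, ⁅x, u⁆⁆ = (0 : V) → u ⊗ₜ[ℂ] x ∈ N :=
    fun u x hx => LieSubmodule.subset_lieSpan ⟨u, x, rfl, hx⟩
  -- bracket identities in L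
  have hFE : ⁅F, E⁆ = -H := by rw [← lie_skew, hEF]
  have hFH : ⁅F, H⁆ = (2 : ℂ) • F := by rw [← lie_skew, hHF]; module
  -- bracket identities in V ⊗ L
  have bE : ∀ u : V, ⁅F, u ⊗ₜ[ℂ] E⁆ = ⁅F, u⁆ ⊗ₜ[ℂ] E - u ⊗ₜ[ℂ] H := by
    intro u
    rw [TensorProduct.LieModule.lie_tmul_right, hFE, tmul_neg, ← sub_eq_add_neg]
  have bH : ∀ u : V, ⁅F, u ⊗ₜ[ℂ] H⁆ = ⁅F, u⁆ ⊗ₜ[ℂ] H + (2 : ℂ) • (u ⊗ₜ[ℂ] F) := by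
    intro u
    rw [TensorProduct.LieModule.lie_tmul_right, hFH, tmul_smul]
  have bF : ∀ u : V, ⁅F, u ⊗ₜ[ℂ] F⁆ = ⁅F, u⁆ ⊗ₜ[ℂ] F := by
    intro u
    rw [TensorProduct.LieModule.lie_tmul_right, lie_self, tmul_zero, add_zero]
  have bEE : ∀ u : V, ⁅E, u ⊗ₜ[ℂ] E⁆ = ⁅E, u⁆ ⊗ₜ[ℂ] E := by
    intro u
    rw [TensorProduct.LieModule.lie_tmul_right, lie_self, tmul_zero, add_zero]
  -- the reduction: it suffices to find one nonzero u with u ⊗ E, u ⊗ F, u ⊗ H ∈ N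
  have final : ∀ u : V, u ≠ 0 → u ⊗ₜ[ℂ] E ∈ N → u ⊗ₜ[ℂ] F ∈ N → u ⊗ₜ[ℂ] H ∈ N →
      N = ⊤ := by
    intro u hu0 huE huF huH
    let MS : LieSubmodule ℂ L V :=
      { carrier := {a : V | ∀ z : L, a ⊗ₜ[ℂ] z ∈ N}
        add_mem' := fun {a c} ha hc z => by rw [add_tmul]; exact N.add_mem (ha z) (hc z)
        zero_mem' := fun z => by rw [zero_tmul]; exact N.zero_mem
        smul_mem' := fun c a ha z => by
          rw [← smul_tmul']; exact N.smul_mem c (ha z)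
        lie_mem := fun {x a} ha => by
          intro z
          have h3 : ⁅x, a⁆ ⊗ₜ[ℂ] z = ⁅x, a ⊗ₜ[ℂ] z⁆ - a ⊗ₜ[ℂ] ⁅x, z⁆ := by
            rw [TensorProduct.LieModule.lie_tmul_right]; abel
          rw [h3]; exact N.sub_mem (N.lie_mem (ha z)) (ha ⁅x, z⁆) }
    have huM : u ∈ MS := fun z =>
      aux_tmul_mem_of_EFH hspan (N : Submodule ℂ (V ⊗[ℂ] L)) u huE huF huH z
    have hMS : MS = ⊤ := by
      rcases eq_bot_or_eq_top MS with hbot | htop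
      · exact absurd (by rw [hbot] at huM; simpa using huM) hu0
      · exact htop
    rw [eq_top_iff]
    rintro z -
    have hz : ∀ a : V, ∀ y : L, a ⊗ₜ[ℂ] y ∈ N := by
      intro a y
      have : a ∈ MS := by rw [hMS]; exact LieSubmodule.mem_top a
      exact this y
    induction z using TensorProduct.induction_on with
    | zero => exact N.zero_mem
    | tmul a y => exact hz a y
    | add a c h1 h2 => exact N.add_mem h1 h2
  -- the basic overshears
  have sh0 : w 0 ⊗ₜ[ℂ] E ∈ N := hS _ _ (by rw [hwE0, lie_zero])
  have hwE1 : ⁅E, w 1⁆ = (d : ℂ) • w 0 := by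
    have h := hwE 0; norm_num at h; exact h
  have sh1 : w 1 ⊗ₜ[ℂ] E ∈ N := hS _ _ (by rw [hwE1, lie_smul, hwE0, smul_zero])
  -- case analysis on the dimension
  rw [hrank] at hdim
  rcases hdim with h2 | hodd
  · -- two-dimensional case : d = 1
    have hd1 : d = 1 := by omega
    subst hd1
    have h4 := N.lie_mem (x := F) sh0
    rw [bE, ← hwsucc] at h4
    have hH0 : w 0 ⊗ₜ[ℂ] H ∈ N := by
      have h6 : w 0 ⊗ₜ[ℂ] H = w 1 ⊗ₜ[ℂ] E - (w 1 ⊗ₜ[ℂ] E - w 0 ⊗ₜ[ℂ] H) := by abel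
      rw [h6]; exact N.sub_mem sh1 h4
    have hH1 : w 1 ⊗ₜ[ℂ] H ∈ N := by
      have h5 := N.lie_mem (x := F) sh1
      rw [bE, ← hwsucc] at h5
      have hw2 : w (1 + 1) = 0 := hwtop
      rw [hw2, zero_tmul, zero_sub] at h5
      have h6 : w 1 ⊗ₜ[ℂ] H = (-1 : ℂ) • (-(w 1 ⊗ₜ[ℂ] H)) := by module
      rw [h6]; exact N.smul_mem _ h5
    have hF0 : w 0 ⊗ₜ[ℂ] F ∈ N := by
      have h5 := N.lie_mem (x := F) hH0
      rw [bH, ← hwsucc] at h5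
      have h7 := N.sub_mem h5 hH1
      have h6 : w 0 ⊗ₜ[ℂ] F
          = (2 : ℂ)⁻¹ • (w 1 ⊗ₜ[ℂ] H + (2 : ℂ) • (w 0 ⊗ₜ[ℂ] F) - w 1 ⊗ₜ[ℂ] H) := by
        match_scalars <;> norm_num
      rw [h6]; exact N.smul_mem _ h7
    exact final (w 0) (hwne 0 (by omega)) sh0 hF0 hH0
  · -- odd-dimensional case : d = 2k
    obtain ⟨k, hk⟩ : ∃ k, d = 2 * k := by
      rcases hodd with ⟨r, hr⟩; exact ⟨r, by omega⟩
    rcases k with _ | k'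
    · -- trivial one-dimensional module
      have hd0 : d = 0 := by omega
      subst hd0
      have hH' : ⁅H, ⁅H, w 0⁆⁆ = (0 : V) := by
        have h := hwH 0; norm_num at h; rw [h, lie_zero]
      have hF' : ⁅F, ⁅F, w 0⁆⁆ = (0 : V) := by
        rw [← hwsucc 0, hwtop, lie_zero]
      have hE' : ⁅E, ⁅E, w 0⁆⁆ = (0 : V) := by rw [hwE0, lie_zero]
      exact final (w 0) (hwne 0 (by omega)) (hS _ _ hE') (hS _ _ hF') (hS _ _ hH')
    · -- d = 2 * (k' + 1)
      -- the key inductive family of elements of N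
      have keyU : ∀ i : ℕ, w i ⊗ₜ[ℂ] E ∈ N → ∀ j : ℕ,
          w (j + i + 2) ⊗ₜ[ℂ] E - ((j : ℂ) + 2) • (w (j + i + 1) ⊗ₜ[ℂ] H)
            - (((j : ℂ) + 2) * ((j : ℂ) + 1)) • (w (j + i) ⊗ₜ[ℂ] F) ∈ N := by
        intro i hi j
        induction j with
        | zero =>
          have h1 := N.lie_mem (x := F) (N.lie_mem (x := F) hi)
          rw [bE, ← hwsucc, lie_sub, bE, bH, ← hwsucc, ← hwsucc] at h1
          have h1 : _ ∈ N := h1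
          convert h1 using 1
          simp only [Nat.zero_add]
          push_cast
          module
        | succ j ih =>
          have h1 := N.lie_mem (x := F) ih
          rw [lie_sub, lie_sub, lie_smul, lie_smul, bE, bH, bF,
            ← hwsucc, ← hwsucc, ← hwsucc] at h1
          have h1 : _ ∈ N := h1
          convert h1 using 1
          simp only [show j + 1 + i + 2 = j + i + 2 + 1 from by omega,
            show j + 1 + i + 1 = j + i + 1 + 1 from by omega,
            show j + 1 + i = j + i + 1 from by omega]
          push_cast
          module
      have hX0 := keyU 0 sh0 k'
      simp only [Nat.add_zero] at hX0
      -- hX0 : w (k'+2) ⊗ E - (k'+2) • (w (k'+1) ⊗ H) - ((k'+2)(k'+1)) • (w k' ⊗ F) ∈ N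
      have hX1 : w (k' + 2) ⊗ₜ[ℂ] E - ((k' : ℂ) + 1) • (w (k' + 1) ⊗ₜ[ℂ] H)
          - (((k' : ℂ) + 1) * (k' : ℂ)) • (w k' ⊗ₜ[ℂ] F) ∈ N := by
        rcases k' with _ | k''
        · have h1 := N.lie_mem (x := F) sh1
          rw [bE, ← hwsucc] at h1
          have h1 : _ ∈ N := h1
          convert h1 using 1
          norm_num
        · have h1 := keyU 1 sh1 k''
          convert h1 using 1
          push_cast
          module
      have hX2 : w (k' + 1) ⊗ₜ[ℂ] H ∈ N := by
        apply hS
        have h1 : ⁅H, w (k' + 1)⁆ = 0 := by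
          rw [hwH]
          have h2 : ((d : ℂ) - 2 * ((k' + 1 : ℕ) : ℂ)) = 0 := by
            rw [hk]; push_cast; ring
          rw [h2, zero_smul]
        rw [h1, lie_zero]
      -- solve for w (k'+2) ⊗ E and w k' ⊗ F
      have hEk : w (k' + 2) ⊗ₜ[ℂ] E ∈ N := by
        have hc : w (k' + 2) ⊗ₜ[ℂ] E
            = (((k' : ℂ) + 2) / 2) • (w (k' + 2) ⊗ₜ[ℂ] E - ((k' : ℂ) + 1) • (w (k' + 1) ⊗ₜ[ℂ] H)
                - (((k' : ℂ) + 1) * (k' : ℂ)) • (w k' ⊗ₜ[ℂ] F))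
              + (-(k' : ℂ) / 2) • (w (k' + 2) ⊗ₜ[ℂ] E - ((k' : ℂ) + 2) • (w (k' + 1) ⊗ₜ[ℂ] H)
                - (((k' : ℂ) + 2) * ((k' : ℂ) + 1)) • (w k' ⊗ₜ[ℂ] F))
              + (((k' : ℂ) + 2) / 2) • (w (k' + 1) ⊗ₜ[ℂ] H) := by
          match_scalars <;> ring
        rw [hc]
        exact N.add_mem (N.add_mem (N.smul_mem _ hX1) (N.smul_mem _ hX0)) (N.smul_mem _ hX2)
      have hFk : w k' ⊗ₜ[ℂ] F ∈ N := by
        have hne : ((k' : ℂ) + 1) ≠ 0 := Nat.cast_add_one_ne_zero k'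
        have hc : w k' ⊗ₜ[ℂ] F
            = ((1 : ℂ) / (2 * ((k' : ℂ) + 1))) •
                (w (k' + 2) ⊗ₜ[ℂ] E - ((k' : ℂ) + 1) • (w (k' + 1) ⊗ₜ[ℂ] H)
                - (((k' : ℂ) + 1) * (k' : ℂ)) • (w k' ⊗ₜ[ℂ] F))
              - ((1 : ℂ) / (2 * ((k' : ℂ) + 1))) •
                (w (k' + 2) ⊗ₜ[ℂ] E - ((k' : ℂ) + 2) • (w (k' + 1) ⊗ₜ[ℂ] H)
                - (((k' : ℂ) + 2) * ((k' : ℂ) + 1)) • (w k' ⊗ₜ[ℂ] F))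
              - ((1 : ℂ) / (2 * ((k' : ℂ) + 1))) • (w (k' + 1) ⊗ₜ[ℂ] H) := by
          match_scalars <;> field_simp <;> ring
        rw [hc]
        exact N.sub_mem (N.sub_mem (N.smul_mem _ hX1) (N.smul_mem _ hX0)) (N.smul_mem _ hX2)
      -- extract the three pure tensors at w (k'+1)
      have hE1 : w (k' + 1) ⊗ₜ[ℂ] E ∈ N := by
        have h1 := N.lie_mem (x := E) hEk
        rw [bEE, show k' + 2 = k' + 1 + 1 from rfl, hwE (k' + 1)] at h1
        have hcval : (((k' + 1 : ℕ) : ℂ) + 1) * ((d : ℂ) - ((k' + 1 : ℕ) : ℂ))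
            = ((k' : ℂ) + 2) * ((k' : ℂ) + 1) := by
          rw [hk]; push_cast; ring
        rw [hcval, ← smul_tmul'] at h1
        have hne2 : ((k' : ℂ) + 2) * ((k' : ℂ) + 1) ≠ 0 := by
          apply mul_ne_zero
          · have h3 : ((k' + 2 : ℕ) : ℂ) ≠ 0 := Nat.cast_ne_zero.2 (by omega)
            push_cast at h3; exact h3
          · exact Nat.cast_add_one_ne_zero k'
        have h4 := N.smul_mem (((k' : ℂ) + 2) * ((k' : ℂ) + 1))⁻¹ h1
        rwa [smul_smul, inv_mul_cancel₀ hne2, one_smul] at h4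
      have hF1 : w (k' + 1) ⊗ₜ[ℂ] F ∈ N := by
        have h1 := N.lie_mem (x := F) hFk
        rwa [bF, ← hwsucc] at h1
      exact final (w (k' + 1)) (hwne (k' + 1) (by omega)) hE1 hF1 hX2
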